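/- arXiv:1310.0618 — 2 statements merged into one kernel-verified Lean document; each statement's English description precedes it below -/
import Mathlib

section
/- A finite primitive permutation group whose point-stabilisers are generalised dicyclic groups is of affine type. -/
set_option linter.unusedSectionVars false

open MulAction

/-- A permutation action is primitive if it is transitive and all blocks are
trivial. -/
def IsPrimitiveAction (G Ω : Type*) [Group G] [MulAction G Ω] : Prop :=
  IsPretransitive G Ω ∧ ∀ B : Set Ω, IsBlock G B → IsTrivialBlock B

/-- A group is generalised dicyclic if it contains an abelian subgroup `A` of
index 2 of exponent greater than 2, an involution `y ∈ A` and an element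
`x ∉ A` with `x ^ 2 = y` inverting `A` by conjugation. -/
def IsGenDicyclic (G : Type*) [Group G] : Prop :=
  ∃ (A : Subgroup G) (y x : G),
    (∀ a ∈ A, ∀ b ∈ A, a * b = b * a) ∧ (∃ a ∈ A, a ^ 2 ≠ 1) ∧
    y ∈ A ∧ y ^ 2 = 1 ∧ y ≠ 1 ∧ x ∉ A ∧ x ^ 2 = y ∧
    (∀ a ∈ A, x⁻¹ * a * x = a⁻¹) ∧ A.index = 2

private def fpf (G Ω : Type*) [Group G] [MulAction G Ω] : Set G :=
  {g | g = 1 ∨ ∀ γ : Ω, g • γ ≠ γ}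

section AffineAux

variable {G Ω : Type*} [Group G] [Fintype G] [Fintype Ω] [MulAction G Ω]

private lemma fix_all_eq_one [FaithfulSMul G Ω] {g : G} (h : ∀ α : Ω, g • α = α) :
    g = 1 :=
  FaithfulSMul.eq_of_smul_eq_smul (fun β => by rw [h β, one_smul])

private lemma mem_stab_smul {k g : G} {x : Ω} :
    k ∈ stabilizer G (g • x) ↔ g⁻¹ * k * g ∈ stabilizer G x := by
  simp only [mem_stabilizer_iff, mul_smul]
  constructor
  · intro h
    rw [h]
    simp [smul_smul]
  · intro h
    have := congrArg (fun z => g • z) h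
    simpa [smul_smul] using this

private lemma maximal_stabilizer (htrans : IsPretransitive G Ω)
    (hbl : ∀ B : Set Ω, IsBlock G B → IsTrivialBlock B)
    (α : Ω) (K : Subgroup G) (hK : stabilizer G α ≤ K) :
    K = stabilizer G α ∨ K = ⊤ := by
  haveI := htrans
  rcases hbl _ (IsBlock.of_orbit hK) with hsub | huniv
  · left
    refine le_antisymm (fun k hk => ?_) hK
    have h1 : (⟨k, hk⟩ : K) • α ∈ orbit K α := mem_orbit _ _
    have h2 : α ∈ orbit K α := mem_orbit_self α
    have h3 := hsub h1 h2
    rw [mem_stabilizer_iff]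
    rw [Subgroup.smul_def] at h3
    exact h3
  · right
    rw [Subgroup.eq_top_iff']
    intro g
    have hmem : g • α ∈ orbit K α := by rw [huniv]; exact Set.mem_univ _
    obtain ⟨k, hk⟩ := hmem
    have hk' : (k : G) • α = g • α := hk
    have hst : ((k : G)⁻¹ * g) ∈ stabilizer G α := by
      rw [mem_stabilizer_iff, mul_smul, ← hk']
      exact inv_smul_smul _ _
    have : (k : G) * ((k : G)⁻¹ * g) ∈ K := K.mul_mem k.2 (hK hst)
    simpa using this

private lemma structG (hstab : ∀ ω : Ω, IsGenDicyclic (stabilizer G ω)) (α : Ω) :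
    ∃ (As : Set G) (y : G),
      (∀ g ∈ As, g • α = α) ∧ y ∈ As ∧ y • α = α ∧ y ^ 2 = 1 ∧ y ≠ 1 ∧
      (∀ g ∈ As, ∀ h ∈ As, g * h = h * g) ∧
      (∀ h : G, h • α = α → h ∉ As → h ^ 2 = y) ∧
      (∀ h a : G, h • α = α → a ∈ As → h⁻¹ * a * h = a ∨ h⁻¹ * a * h = a⁻¹) := by
  obtain ⟨A, y, x, hcomm, -, hyA, hy2, hy1, hxA, hx2, hinv, hidx⟩ := hstab α
  obtain ⟨w, hw⟩ := Subgroup.index_eq_two_iff.mp hidx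
  have hmemA : ∀ h : (stabilizer G α), h ∉ A → h * x⁻¹ ∈ A := by
    intro h hh
    have h1 : h * w ∈ A := ((hw h).elim And.left (fun z => absurd z.1 hh))
    have h2 : x * w ∈ A := ((hw x).elim And.left (fun z => absurd z.1 hxA))
    have h3 : (h * w) * (x * w)⁻¹ ∈ A := A.mul_mem h1 (A.inv_mem h2)
    have h4 : (h * w) * (x * w)⁻¹ = h * x⁻¹ := by group
    rwa [h4] at h3
  have hxconj : ∀ a : (stabilizer G α), a ∈ A → x * a * x⁻¹ = a⁻¹ := by
    intro a ha
    have h1 := hinv a⁻¹ (A.inv_mem ha)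
    have h2 := congrArg (fun z => x * z * x⁻¹) h1
    simp only [inv_inv] at h2
    have h3 : x * (x⁻¹ * a⁻¹ * x) * x⁻¹ = a⁻¹ := by group
    rw [h3] at h2
    exact h2.symm
  have hsqH : ∀ h : (stabilizer G α), h ∉ A → h ^ 2 = y := by
    intro h hh
    have ha' := hmemA h hh
    calc h ^ 2 = (h * x⁻¹) * (x * (h * x⁻¹) * x⁻¹) * x ^ 2 := by
          rw [pow_two, pow_two]; group
    _ = (h * x⁻¹) * (h * x⁻¹)⁻¹ * y := by rw [hxconj _ ha', hx2]
    _ = y := by group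
  have hconjH : ∀ h : (stabilizer G α), ∀ a ∈ A,
      h⁻¹ * a * h = a ∨ h⁻¹ * a * h = a⁻¹ := by
    intro h a ha
    by_cases hh : h ∈ A
    · left
      rw [mul_assoc, hcomm a ha h hh, ← mul_assoc, inv_mul_cancel, one_mul]
    · right
      have ha' := hmemA h hh
      have hc : a * (h * x⁻¹) = (h * x⁻¹) * a := hcomm a ha _ ha'
      have key : h⁻¹ * a * h = x⁻¹ * ((h * x⁻¹)⁻¹ * (a * (h * x⁻¹))) * x := by group
      rw [hc] at key
      have key2 : x⁻¹ * ((h * x⁻¹)⁻¹ * ((h * x⁻¹) * a)) * x = x⁻¹ * a * x := by group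
      rw [key, key2, hinv a ha]
  refine ⟨Subtype.val '' (A : Set (stabilizer G α)), (y : G), ?_, ⟨y, hyA, rfl⟩, ?_, ?_, ?_,
    ?_, ?_, ?_⟩
  · rintro g ⟨gH, _, rfl⟩
    exact gH.2
  · exact y.2
  · have := congrArg (Subtype.val) hy2
    simpa using this
  · intro hc
    exact hy1 (by ext; simpa using hc)
  · rintro g ⟨gH, hgA, rfl⟩ h ⟨hH, hhA, rfl⟩
    have := congrArg (Subtype.val) (hcomm gH hgA hH hhA)
    simpa using this
  · intro h hα hnot
    have hH : (⟨h, hα⟩ : stabilizer G α) ∉ A := by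
      intro hc
      exact hnot ⟨⟨h, hα⟩, hc, rfl⟩
    have := congrArg (Subtype.val) (hsqH ⟨h, hα⟩ hH)
    simpa using this
  · rintro h a hα ⟨aH, haA, rfl⟩
    rcases hconjH ⟨h, hα⟩ aH haA with h1 | h1
    · left
      have := congrArg (Subtype.val) h1
      simpa using this
    · right
      have := congrArg (Subtype.val) h1
      simpa using this

private lemma invol_central (hstab : ∀ ω : Ω, IsGenDicyclic (stabilizer G ω)) (α : Ω)
    {u : G} (huα : u • α = α) (hu2 : u ^ 2 = 1) :
    ∀ h : G, h • α = α → u * h = h * u := by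
  obtain ⟨As, y, _, _, _, _, hy1, hcomm, hsq, hconj⟩ := structG hstab α
  intro h hh
  have huA : u ∈ As := by
    by_contra hu
    exact hy1 (by rw [← hsq u huα hu, hu2])
  have huinv : u⁻¹ = u := by
    have h1 : u * u = 1 := by rw [← pow_two]; exact hu2
    exact inv_eq_of_mul_eq_one_right h1
  have key : h⁻¹ * u * h = u → u * h = h * u := by
    intro h1
    have h3 : h * (h⁻¹ * u * h) = u * h := by group
    rw [h1] at h3
    exact h3.symm
  rcases hconj h u hh huA with h1 | h1
  · exact key h1
  · rw [huinv] at h1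
    exact key h1
private lemma subgroup_eq_of_le_of_card_le {H K : Subgroup G} (h : H ≤ K)
    (hc : Nat.card K ≤ Nat.card H) : H = K := by
  apply SetLike.ext'
  apply Set.eq_of_subset_of_ncard_le h ?_ (Set.toFinite _)
  rw [← Nat.card_coe_set_eq, ← Nat.card_coe_set_eq]
  exact hc

private lemma stab_card_eq (htrans : IsPretransitive G Ω) (α β : Ω) :
    Nat.card (stabilizer G α) = Nat.card (stabilizer G β) := by
  haveI := htrans
  haveI : Nonempty Ω := ⟨α⟩
  have h1 := (stabilizer G α).index_mul_card
  have h2 := (stabilizer G β).index_mul_card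
  rw [index_stabilizer_of_transitive] at h1 h2
  have hΩ : 0 < Nat.card Ω := Nat.card_pos
  exact Nat.eq_of_mul_eq_mul_left hΩ (h1.trans h2.symm)

private lemma stab_le_eq [FaithfulSMul G Ω] (htrans : IsPretransitive G Ω)
    (hbl : ∀ B : Set Ω, IsBlock G B → IsTrivialBlock B)
    (hstab : ∀ ω : Ω, IsGenDicyclic (stabilizer G ω))
    {α β : Ω} (hle : stabilizer G α ≤ stabilizer G β) : α = β := by
  haveI := htrans
  have hstabeq : ∀ {γ δ : Ω}, stabilizer G γ ≤ stabilizer G δ →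
      stabilizer G γ = stabilizer G δ :=
    fun {γ δ} h => subgroup_eq_of_le_of_card_le h (le_of_eq (stab_card_eq htrans δ γ))
  set B : Set Ω := {γ | stabilizer G α ≤ stabilizer G γ} with hB
  have hblock : IsBlock G B := by
    rw [isBlock_iff_smul_eq_of_nonempty]
    rintro g ⟨δ, hδ1, hδ2⟩
    obtain ⟨δ', hδ', rfl⟩ := hδ1
    have e1 : stabilizer G δ' = stabilizer G α := (hstabeq hδ').symm
    have e2 : stabilizer G (g • δ') = stabilizer G α := (hstabeq hδ2).symm
    have key : ∀ k : G, k ∈ stabilizer G α ↔ g * k * g⁻¹ ∈ stabilizer G α := by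
      intro k
      have key0 : g * k * g⁻¹ ∈ stabilizer G (g • δ') ↔ k ∈ stabilizer G δ' := by
        rw [mem_stab_smul]
        have hk : g⁻¹ * (g * k * g⁻¹) * g = k := by group
        rw [hk]
      conv_lhs => rw [← e1]
      conv_rhs => rw [← e2]
      exact key0.symm
    ext γ
    constructor
    · rintro ⟨γ', hγ', rfl⟩
      intro k hk
      have h1 : g⁻¹ * k * g ∈ stabilizer G α := by
        rw [key (g⁻¹ * k * g)]
        have : g * (g⁻¹ * k * g) * g⁻¹ = k := by group
        rw [this]
        exact hk
      rw [mem_stab_smul]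
      exact hγ' h1
    · intro hγ
      refine ⟨g⁻¹ • γ, ?_, by simp⟩
      intro k hk
      have h1 : g * k * g⁻¹ ∈ stabilizer G γ := hγ ((key k).mp hk)
      rw [mem_stab_smul]
      simpa using h1
  have hαB : α ∈ B := by simp only [hB, Set.mem_setOf_eq]; exact le_rfl
  have hβB : β ∈ B := by simp only [hB, Set.mem_setOf_eq]; exact hle
  rcases hbl B hblock with hsub | huniv
  · exact hsub hαB hβB
  · exfalso
    obtain ⟨As, y, hfix, hyA, hyα, hy2, hy1, -, -, -⟩ := structG hstab α
    apply hy1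
    apply fix_all_eq_one (Ω := Ω)
    intro γ
    have hγB : γ ∈ B := huniv ▸ Set.mem_univ γ
    exact hγB (mem_stabilizer_iff.mpr hyα)

private lemma cent_eq [FaithfulSMul G Ω] (htrans : IsPretransitive G Ω)
    (hbl : ∀ B : Set Ω, IsBlock G B → IsTrivialBlock B)
    (hstab : ∀ ω : Ω, IsGenDicyclic (stabilizer G ω))
    (α : Ω) {u : G} (hu1 : u ≠ 1) (hu2 : u ^ 2 = 1) (huα : u • α = α) :
    Subgroup.centralizer {u} = stabilizer G α := by
  haveI := htrans
  have hle : stabilizer G α ≤ Subgroup.centralizer {u} := by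
    intro h hh
    rw [Subgroup.mem_centralizer_iff]
    rintro v rfl
    exact invol_central hstab α huα hu2 h hh
  rcases maximal_stabilizer htrans hbl α _ hle with heq | htop
  · exact heq
  · exfalso
    apply hu1
    apply fix_all_eq_one (Ω := Ω)
    intro γ
    obtain ⟨g, rfl⟩ := htrans.exists_smul_eq α γ
    have hcomm : u * g = g * u := by
      have : g ∈ Subgroup.centralizer {u} := htop ▸ Subgroup.mem_top g
      exact Subgroup.mem_centralizer_iff.mp this u rfl
    rw [← mul_smul, hcomm, mul_smul, huα]

private lemma invol_fix_unique [FaithfulSMul G Ω] (htrans : IsPretransitive G Ω)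
    (hbl : ∀ B : Set Ω, IsBlock G B → IsTrivialBlock B)
    (hstab : ∀ ω : Ω, IsGenDicyclic (stabilizer G ω))
    {α β : Ω} {u : G} (hu1 : u ≠ 1) (hu2 : u ^ 2 = 1)
    (huα : u • α = α) (huβ : u • β = β) : α = β := by
  have h1 := cent_eq htrans hbl hstab α hu1 hu2 huα
  have h2 := cent_eq htrans hbl hstab β hu1 hu2 huβ
  exact stab_le_eq htrans hbl hstab (le_of_eq (h1.symm.trans h2))

private lemma frobenius' [FaithfulSMul G Ω] (htrans : IsPretransitive G Ω)
    (hbl : ∀ B : Set Ω, IsBlock G B → IsTrivialBlock B)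
    (hstab : ∀ ω : Ω, IsGenDicyclic (stabilizer G ω))
    {α β : Ω} {d : G} (hd1 : d ≠ 1) (hdα : d • α = α) (hdβ : d • β = β) : α = β := by
  haveI := htrans
  obtain ⟨Asα, yα, hfixα, hyAα, hyαα, hy2α, hy1α, hcommα, hsqα, hconjα⟩ := structG hstab α
  obtain ⟨Asβ, yβ, hfixβ, hyAβ, hyββ, hy2β, hy1β, hcommβ, hsqβ, hconjβ⟩ := structG hstab β
  by_cases hdA : d ∈ Asα
  · by_cases hdB : d ∈ Asβ
    · -- d in both abelian parts : use normalizer of zpowers d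
      have hconj_zpow : ∀ (e : G), (e⁻¹ * d * e = d ∨ e⁻¹ * d * e = d⁻¹) →
          ∀ k ∈ Subgroup.zpowers d, e⁻¹ * k * e ∈ Subgroup.zpowers d := by
        intro e he k hk
        obtain ⟨n, rfl⟩ := hk
        have h1 : e⁻¹ * d ^ n * e = (e⁻¹ * d * e) ^ n := by
          have h2 : ((MulAut.conj e⁻¹) d) ^ n = (MulAut.conj e⁻¹) (d ^ n) :=
            (map_zpow (MulAut.conj e⁻¹) d n).symm
          simp only [MulAut.conj_apply, inv_inv] at h2
          exact h2.symm
        rcases he with hc | hc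
        · rw [h1, hc]
          exact ⟨n, rfl⟩
        · rw [h1, hc, inv_zpow]
          exact Subgroup.inv_mem _ ⟨n, rfl⟩
      have hnz : ∀ γ : Ω, d • γ = γ →
          (∀ h a : G, h • γ = γ → a ∈ ({s | s ∈ Subgroup.zpowers d} : Set G) → True) → True :=
        fun _ _ _ => trivial
      have hle' : ∀ (γ : Ω), d • γ = γ →
          (∀ h a : G, h • γ = γ → a = d → h⁻¹ * a * h = a ∨ h⁻¹ * a * h = a⁻¹) →
          stabilizer G γ ≤ Subgroup.normalizer (Subgroup.zpowers d : Set G) := by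
        intro γ hdγ hcγ h hh
        have hhγ : h • γ = γ := mem_stabilizer_iff.mp hh
        have hhγ' : h⁻¹ • γ = γ := inv_smul_eq_iff.mpr hhγ.symm
        rw [Subgroup.mem_normalizer_iff]
        intro k
        constructor
        · intro hk
          have h2 := hconj_zpow h⁻¹ (by simpa using hcγ h⁻¹ d hhγ' rfl) k hk
          simpa using h2
        · intro hk
          have h2 := hconj_zpow h (hcγ h d hhγ rfl) _ hk
          have h3 : h⁻¹ * (h * k * h⁻¹) * h = k := by group
          rwa [h3] at h2
      have hleα' : stabilizer G α ≤ Subgroup.normalizer (Subgroup.zpowers d : Set G) :=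
        hle' α hdα (fun h a hhγ ha => ha ▸ hconjα h a hhγ (ha ▸ hdA))
      have hleβ' : stabilizer G β ≤ Subgroup.normalizer (Subgroup.zpowers d : Set G) :=
        hle' β hdβ (fun h a hhγ ha => ha ▸ hconjβ h a hhγ (ha ▸ hdB))
      rcases maximal_stabilizer htrans hbl α _ hleα' with heq | htop
      · exact (stab_le_eq htrans hbl hstab (heq ▸ hleβ')).symm
      · exfalso
        apply hd1
        apply fix_all_eq_one (Ω := Ω)
        intro γ
        obtain ⟨g, rfl⟩ := htrans.exists_smul_eq α γ
        have hg : g⁻¹ ∈ Subgroup.normalizer (Subgroup.zpowers d : Set G) := htop ▸ Subgroup.mem_top g⁻¹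
        have h2 : g⁻¹ * d * g ∈ Subgroup.zpowers d := by
          have := (Subgroup.mem_normalizer_iff.mp hg d).mp (Subgroup.mem_zpowers d)
          simpa using this
        obtain ⟨n, hn⟩ := h2
        have h3 : (g⁻¹ * d * g) • α = α := by
          rw [← hn]
          have : d ^ n ∈ stabilizer G α :=
            Subgroup.zpow_mem _ (mem_stabilizer_iff.mpr hdα) n
          exact mem_stabilizer_iff.mp this
        calc d • g • α = g • (g⁻¹ * d * g) • α := by
              simp [smul_smul, mul_assoc]
        _ = g • α := by rw [h3]
    · -- d ∉ Asβ : d ^ 2 = yβ, and yβ fixes both α and β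
      have hsq := hsqβ d hdβ hdB
      have hyβα : yβ • α = α := by
        rw [← hsq, pow_two, mul_smul, hdα, hdα]
      exact invol_fix_unique htrans hbl hstab hy1β hy2β hyβα hyββ
  · have hsq := hsqα d hdα hdA
    have hyαβ : yα • β = β := by
      rw [← hsq, pow_two, mul_smul, hdβ, hdβ]
    exact invol_fix_unique htrans hbl hstab hy1α hy2α hyαα hyαβ


private lemma card_fpf [FaithfulSMul G Ω] [Nonempty Ω] (htrans : IsPretransitive G Ω)
    (hbl : ∀ B : Set Ω, IsBlock G B → IsTrivialBlock B)
    (hstab : ∀ ω : Ω, IsGenDicyclic (stabilizer G ω)) :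
    Nat.card (fpf G Ω) = Nat.card Ω := by
  classical
  haveI := htrans
  set st : Ω → Finset G := fun α => Finset.univ.filter (fun g : G => g • α = α) with hst
  have hstmem : ∀ (α : Ω) (g : G), g ∈ st α ↔ g • α = α := by
    intro α g; simp [hst]
  have hstcard : ∀ α : Ω, Nat.card Ω * (st α).card = Fintype.card G := by
    intro α
    have h1 := (stabilizer G α).index_mul_card
    rw [index_stabilizer_of_transitive] at h1
    have h2 : Nat.card (stabilizer G α) = (st α).card := by
      rw [Nat.card_eq_fintype_card]
      have h3 : Fintype.card (stabilizer G α) = Fintype.card {g : G // g • α = α} :=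
        Fintype.card_congr (Equiv.subtypeEquivRight (fun g => mem_stabilizer_iff))
      rw [h3, Fintype.card_subtype]
    rw [h2] at h1
    rw [← Nat.card_eq_fintype_card]
    exact h1
  obtain ⟨α0⟩ := (inferInstance : Nonempty Ω)
  have hstpos : ∀ α : Ω, (1 : G) ∈ st α := by
    intro α; rw [hstmem]; exact one_smul _ _
  have hn0 : 0 < Nat.card Ω := Nat.card_pos
  have hcc : ∀ α : Ω, (st α).card = (st α0).card := fun α =>
    Nat.eq_of_mul_eq_mul_left hn0 ((hstcard α).trans (hstcard α0).symm)
  set p : G → Prop := fun g => g = 1 ∨ ∀ γ : Ω, g • γ ≠ γ with hp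
  have hsplit := Finset.card_filter_add_card_filter_not
    (s := (Finset.univ : Finset G)) (p := p)
  have hdisj : ∀ α ∈ (Finset.univ : Finset Ω), ∀ β ∈ (Finset.univ : Finset Ω), α ≠ β →
      Disjoint ((st α).erase 1) ((st β).erase 1) := by
    intro α _ β _ hne
    rw [Finset.disjoint_left]
    intro g hgα hgβ
    rw [Finset.mem_erase, hstmem] at hgα hgβ
    exact hne (frobenius' htrans hbl hstab hgα.1 hgα.2 hgβ.2)
  have hSeq : (Finset.univ.filter (fun a => ¬ p a)) =
      Finset.univ.biUnion (fun α : Ω => (st α).erase 1) := by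
    ext g
    rw [Finset.mem_filter, Finset.mem_biUnion]
    constructor
    · rintro ⟨-, hnp⟩
      have h1 : g ≠ 1 := fun hc => hnp (Or.inl hc)
      have h2 : ∃ γ : Ω, g • γ = γ := by
        by_contra hno
        exact hnp (Or.inr (fun γ hγ => hno ⟨γ, hγ⟩))
      obtain ⟨γ, h2⟩ := h2
      exact ⟨γ, Finset.mem_univ γ, Finset.mem_erase.mpr ⟨h1, (hstmem γ g).mpr h2⟩⟩
    · rintro ⟨γ, -, hγ⟩
      rw [Finset.mem_erase] at hγ
      refine ⟨Finset.mem_univ g, ?_⟩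
      show ¬(g = 1 ∨ ∀ γ : Ω, g • γ ≠ γ)
      rintro (rfl | hall)
      · exact hγ.1 rfl
      · exact hall γ ((hstmem γ g).mp hγ.2)
  have hbu : (Finset.univ.biUnion (fun α : Ω => (st α).erase 1)).card
      = Nat.card Ω * ((st α0).card - 1) := by
    rw [Finset.card_biUnion hdisj]
    have hcon : ∀ α ∈ (Finset.univ : Finset Ω), ((st α).erase 1).card = (st α0).card - 1 := by
      intro α _
      rw [Finset.card_erase_of_mem (hstpos α), hcc α]
    rw [Finset.sum_congr rfl hcon, Finset.sum_const, Finset.card_univ, smul_eq_mul,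
      Nat.card_eq_fintype_card]
  have hc1 : 1 ≤ (st α0).card := Finset.card_pos.mpr ⟨1, hstpos α0⟩
  have hexpand : Nat.card Ω * (st α0).card = Nat.card Ω * ((st α0).card - 1) + Nat.card Ω := by
    conv_lhs => rw [← Nat.succ_pred_eq_of_pos hc1]
    rw [Nat.mul_succ, Nat.pred_eq_sub_one]
  have hm := hstcard α0
  have hfp : Nat.card (fpf G Ω) = (Finset.univ.filter p).card := by
    rw [Nat.card_coe_set_eq, Set.ncard_eq_toFinset_card']
    congr 1
    ext g
    rw [Set.mem_toFinset]
    simp [fpf, hp]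
  rw [Finset.card_univ, hSeq, hbu] at hsplit
  rw [hfp]
  omega

private lemma fpf_inverted [FaithfulSMul G Ω] (htrans : IsPretransitive G Ω)
    (hbl : ∀ B : Set Ω, IsBlock G B → IsTrivialBlock B)
    (hstab : ∀ ω : Ω, IsGenDicyclic (stabilizer G ω))
    {α : Ω} {u : G} (hu1 : u ≠ 1) (hu2 : u ^ 2 = 1) (huα : u • α = α) :
    ∀ f ∈ fpf G Ω, u * f * u = f⁻¹ := by
  classical
  haveI := htrans
  haveI : Nonempty Ω := ⟨α⟩
  have h2 : u * u = 1 := by rw [← pow_two]; exact hu2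
  have huinv : u⁻¹ = u := inv_eq_of_mul_eq_one_right h2
  have hIF : Set.range (fun g : G => g * u * g⁻¹ * u) ⊆ fpf G Ω := by
    rintro k ⟨g, rfl⟩
    simp only []
    by_cases hk1 : g * u * g⁻¹ * u = 1
    · exact Or.inl hk1
    right
    intro γ hγ
    have hconjk : u * (g * u * g⁻¹ * u) * u⁻¹ = (g * u * g⁻¹ * u)⁻¹ := by
      rw [huinv]
      calc u * (g * u * g⁻¹ * u) * u = (u * g * u * g⁻¹) * (u * u) := by group
      _ = u * g * u * g⁻¹ := by rw [h2, mul_one]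
      _ = u⁻¹ * g * u⁻¹ * g⁻¹ := by rw [huinv]
      _ = (g * u * g⁻¹ * u)⁻¹ := by group
    have hkinvγ : (g * u * g⁻¹ * u)⁻¹ • γ = γ := inv_smul_eq_iff.mpr hγ.symm
    have hkuγ : (g * u * g⁻¹ * u)⁻¹ • (u • γ) = u • γ := by
      have h3 : (u * (g * u * g⁻¹ * u) * u⁻¹) • (u • γ) = u • ((g * u * g⁻¹ * u) • γ) := by
        simp only [mul_smul]
        rw [inv_smul_smul]
      rw [hconjk] at h3
      rw [h3, hγ]
    have hknz : (g * u * g⁻¹ * u)⁻¹ ≠ 1 := by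
      rw [ne_eq, inv_eq_one]
      exact hk1
    have huγ : u • γ = γ := frobenius' htrans hbl hstab hknz hkuγ hkinvγ
    have hγα : γ = α := frobenius' htrans hbl hstab hu1 huγ huα
    rw [hγα] at hγ
    have hcomm := invol_central hstab α huα hu2 (g * u * g⁻¹ * u) hγ
    have h3 : u * (g * u * g⁻¹ * u) * u⁻¹ = (g * u * g⁻¹ * u) := by
      rw [hcomm]
      group
    rw [h3] at hconjk
    have hk2 : (g * u * g⁻¹ * u) * (g * u * g⁻¹ * u) = 1 := by
      nth_rewrite 2 [hconjk]
      rw [mul_inv_cancel]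
    have hvα : (g * u * g⁻¹) • α = α := by
      have e : g * u * g⁻¹ = (g * u * g⁻¹ * u) * u⁻¹ := by group
      rw [e, huinv, mul_smul, huα, hγ]
    have hvg : (g * u * g⁻¹) • (g • α) = g • α := by
      have e : (g * u * g⁻¹) * g = g * u := by group
      rw [smul_smul, e, mul_smul, huα]
    have hvne : g * u * g⁻¹ ≠ 1 := by
      intro hc
      apply hu1
      have := congrArg (fun z => g⁻¹ * z * g) hc
      calc u = g⁻¹ * (g * u * g⁻¹) * g := by group
      _ = g⁻¹ * 1 * g := by rw [hc]
      _ = 1 := by group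
    have hgα : g • α = α := frobenius' htrans hbl hstab hvne hvg hvα
    have hcommg := invol_central hstab α huα hu2 g hgα
    apply hk1
    calc g * u * g⁻¹ * u = (u * g) * g⁻¹ * u := by rw [← hcommg]
    _ = u * u := by group
    _ = 1 := h2
  -- cardinality of the range
  set C := Subgroup.centralizer ({u} : Set G) with hC
  have hCeq : C = stabilizer G α := cent_eq htrans hbl hstab α hu1 hu2 huα
  have hlift : ∀ a b : G, @Setoid.r G (QuotientGroup.leftRel C) a b →
      (fun g : G => g * u * g⁻¹ * u) a = (fun g : G => g * u * g⁻¹ * u) b := by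
    intro a b hab
    have hab' : a⁻¹ * b ∈ C := (QuotientGroup.leftRel_apply).mp hab
    have hcu : u * (a⁻¹ * b) = (a⁻¹ * b) * u := Subgroup.mem_centralizer_iff.mp hab' u rfl
    simp only []
    have e1 : b * u * b⁻¹ = a * ((a⁻¹ * b) * u * (a⁻¹ * b)⁻¹) * a⁻¹ := by group
    have e2 : (a⁻¹ * b) * u * (a⁻¹ * b)⁻¹ = u := by
      rw [← hcu]
      group
    rw [e1, e2]
  set ψ : G ⧸ C → G := fun q => Quotient.liftOn' q (fun g : G => g * u * g⁻¹ * u) hlift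
    with hψ
  have hψmk : ∀ g : G, ψ (QuotientGroup.mk g) = g * u * g⁻¹ * u := fun g => rfl
  have hψinj : Function.Injective ψ := by
    intro q1 q2 hq
    obtain ⟨a, rfl⟩ := QuotientGroup.mk_surjective q1
    obtain ⟨b, rfl⟩ := QuotientGroup.mk_surjective q2
    have hab : a * u * a⁻¹ * u = b * u * b⁻¹ * u := by
      rw [← hψmk a, ← hψmk b, hq]
    have hab2 : a * u * a⁻¹ = b * u * b⁻¹ := mul_right_cancel hab
    rw [QuotientGroup.eq]
    rw [hC, Subgroup.mem_centralizer_iff]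
    intro v hv
    rw [Set.mem_singleton_iff] at hv
    rw [hv]
    calc u * (a⁻¹ * b) = a⁻¹ * (a * u * a⁻¹) * b := by group
    _ = a⁻¹ * (b * u * b⁻¹) * b := by rw [hab2]
    _ = (a⁻¹ * b) * u := by group
  have hrange : Set.range ψ = Set.range (fun g : G => g * u * g⁻¹ * u) := by
    ext z
    constructor
    · rintro ⟨q, rfl⟩
      obtain ⟨g, rfl⟩ := QuotientGroup.mk_surjective q
      exact ⟨g, hψmk g⟩
    · rintro ⟨g, rfl⟩
      exact ⟨QuotientGroup.mk g, hψmk g⟩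
  have hIcard : Nat.card (Set.range (fun g : G => g * u * g⁻¹ * u)) = Nat.card Ω := by
    rw [← hrange]
    rw [← Nat.card_congr (Equiv.ofInjective ψ hψinj)]
    rw [← Subgroup.index_eq_card, hCeq]
    haveI := htrans
    exact index_stabilizer_of_transitive G α
  have hFcard := card_fpf htrans hbl hstab
  have hEq : Set.range (fun g : G => g * u * g⁻¹ * u) = fpf G Ω := by
    apply Set.eq_of_subset_of_ncard_le hIF ?_ (Set.toFinite _)
    rw [← Nat.card_coe_set_eq, ← Nat.card_coe_set_eq, hIcard, hFcard]
  intro f hf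
  rw [← hEq] at hf
  obtain ⟨g, rfl⟩ := hf
  simp only []
  rw [show (g * u * g⁻¹ * u)⁻¹ = u⁻¹ * g * u⁻¹ * g⁻¹ by group, huinv]
  calc u * (g * u * g⁻¹ * u) * u = (u * g * u * g⁻¹) * (u * u) := by group
  _ = u * g * u * g⁻¹ := by rw [h2, mul_one]


private lemma fpf_mul_mem [FaithfulSMul G Ω] [Nonempty Ω] (htrans : IsPretransitive G Ω)
    (hbl : ∀ B : Set Ω, IsBlock G B → IsTrivialBlock B)
    (hstab : ∀ ω : Ω, IsGenDicyclic (stabilizer G ω))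
    {a b : G} (ha' : a ∈ fpf G Ω) (hb' : b ∈ fpf G Ω) : a * b ∈ fpf G Ω := by
  classical
  haveI := htrans
  rcases ha' with rfl | ha
  · rw [one_mul]; exact hb'
  rcases hb' with rfl | hb
  · rw [mul_one]; exact Or.inr ha
  by_cases hab1 : a * b = 1
  · exact Or.inl hab1
  right
  intro α hα
  exfalso
  obtain ⟨ω0⟩ := (inferInstance : Nonempty Ω)
  obtain ⟨-, y, -, -, hyω, hy2, hy1, -, -, -⟩ := structG hstab ω0
  have hinvy := fpf_inverted htrans hbl hstab hy1 hy2 hyω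
  have hya : y * a * y = a⁻¹ := hinvy a (Or.inr ha)
  have hyb : y * b * y = b⁻¹ := hinvy b (Or.inr hb)
  have hy2' : y * y = 1 := by rw [← pow_two]; exact hy2
  have e0 : (y * a * y) * (y * b * y) = y * (a * (y * y) * b) * y := by group
  rw [hy2', mul_one] at e0
  have hstep1 : y * (a * b) * y = a⁻¹ * b⁻¹ := by rw [← e0, hya, hyb]
  have hαinv : (a * b)⁻¹ • α = α := inv_smul_eq_iff.mpr hα.symm
  have hfix1 : (a⁻¹ * b⁻¹) • (y • α) = y • α := by
    have e1 : (y * (a * b) * y) • (y • α) = y • α := by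
      calc (y * (a * b) * y) • (y • α) = y • (a * b) • y • y • α := by
            simp only [mul_smul]
      _ = y • (a * b) • α := by rw [← mul_smul y y α, hy2', one_smul]
      _ = y • α := by rw [hα]
    rw [hstep1] at e1
    exact e1
  have hfix2 : (a⁻¹ * b⁻¹) • (b • α) = b • α := by
    have e : a⁻¹ * b⁻¹ = b * (a * b)⁻¹ * b⁻¹ := by group
    rw [e]
    calc (b * (a * b)⁻¹ * b⁻¹) • (b • α) = b • (a * b)⁻¹ • b⁻¹ • b • α := by
          simp only [mul_smul]
    _ = b • (a * b)⁻¹ • α := by rw [inv_smul_smul]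
    _ = b • α := by rw [hαinv]
  have hfix3 : (a⁻¹ * b⁻¹) • (a⁻¹ • α) = a⁻¹ • α := by
    have e : a⁻¹ * b⁻¹ = a⁻¹ * (a * b)⁻¹ * a := by group
    rw [e]
    calc (a⁻¹ * (a * b)⁻¹ * a) • (a⁻¹ • α) = a⁻¹ • (a * b)⁻¹ • a • a⁻¹ • α := by
          simp only [mul_smul]
    _ = a⁻¹ • (a * b)⁻¹ • α := by rw [smul_inv_smul]
    _ = a⁻¹ • α := by rw [hαinv]
  have habinv_ne : a⁻¹ * b⁻¹ ≠ 1 := by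
    intro hc
    apply hab1
    have h3 : b * a = 1 := by
      have h4 := congrArg Inv.inv hc
      simpa [mul_inv_rev] using h4
    have h4 : b = a⁻¹ := eq_inv_of_mul_eq_one_left h3
    rw [h4, mul_inv_cancel]
  have e1 : y • α = b • α := frobenius' htrans hbl hstab habinv_ne hfix1 hfix2
  have e2 : y • α = a⁻¹ • α := frobenius' htrans hbl hstab habinv_ne hfix1 hfix3
  have htα : (a * y) • α = α := by
    rw [mul_smul, e2, smul_inv_smul]
  have hsα : (y * b) • α = α := by
    rw [mul_smul, ← e1, ← mul_smul, hy2', one_smul]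
  have ht2 : (a * y) * (a * y) = 1 := by
    calc (a * y) * (a * y) = a * (y * a * y) := by group
    _ = a * a⁻¹ := by rw [hya]
    _ = 1 := mul_inv_cancel a
  have hts := invol_central hstab α htα (by rw [pow_two]; exact ht2) (y * b) hsα
  have e3 : (a * y) * (y * b) = a * (y * y) * b := by group
  rw [hy2', mul_one] at e3
  have e4 : (y * b) * (a * y) = y * (b * a) * y := by group
  have hts' : a * b = y * (b * a) * y := by rw [← e3, ← e4]; exact hts
  have hR : b * a = a⁻¹ * b⁻¹ := by
    have e5 : y * (a * b) * y = b * a := by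
      rw [hts']
      calc y * (y * (b * a) * y) * y = (y * y) * (b * a) * (y * y) := by group
      _ = b * a := by rw [hy2', one_mul, mul_one]
    rw [← e5, hstep1]
  have hc2 : (a * b) * (a * b) = 1 := by
    calc (a * b) * (a * b) = a * (b * a) * b := by group
    _ = a * (a⁻¹ * b⁻¹) * b := by rw [hR]
    _ = 1 := by group
  have hinvc := fpf_inverted htrans hbl hstab hab1 (by rw [pow_two]; exact hc2) hα
  have hca : (a * b) * a * (a * b) = a⁻¹ := hinvc a (Or.inr ha)
  have hcb : (a * b) * b * (a * b) = b⁻¹ := hinvc b (Or.inr hb)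
  have hcinv : (a * b)⁻¹ = a * b := inv_eq_of_mul_eq_one_right hc2
  have e6 : (a * b) * b * (a * b) = (a * b) * a⁻¹ := by
    calc (a * b) * b * (a * b) = (a * b) * a⁻¹ * ((a * b) * (a * b)) := by group
    _ = (a * b) * a⁻¹ := by rw [hc2, mul_one]
  have hba2 : (b * a) * (b * a) = 1 := by
    have h5 := congrArg (fun z => z * (b * a)) hR
    rw [h5]
    group
  have e7 : b⁻¹ = a * b * a := by
    have h6 : b * (a * b * a) = 1 := by
      calc b * (a * b * a) = (b * a) * (b * a) := by group
      _ = 1 := hba2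
    exact inv_eq_of_mul_eq_one_right h6
  have e8 : (a * b) * a⁻¹ = (a * b) * a := by
    rw [← e6, hcb, e7]
  have ha_inv : a⁻¹ = a := mul_left_cancel e8
  have hcac : (a * b) * a * (a * b) = a := by rw [hca, ha_inv]
  have hcomm_ac : (a * b) * a = a * (a * b) := by
    have e9 : (a * b) * a = ((a * b) * a * (a * b)) * (a * b)⁻¹ := by group
    rw [hcac, hcinv] at e9
    exact e9
  have hcent := cent_eq htrans hbl hstab α hab1 (by rw [pow_two]; exact hc2) hα
  have haC : a ∈ Subgroup.centralizer ({a * b} : Set G) := by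
    rw [Subgroup.mem_centralizer_iff]
    intro v hv
    rw [Set.mem_singleton_iff] at hv
    rw [hv]
    exact hcomm_ac
  rw [hcent] at haC
  exact ha α (mem_stabilizer_iff.mp haC)

end AffineAux

/-- A finite primitive permutation group whose point-stabilisers are
generalised dicyclic is of affine type: it contains a regular normal
elementary abelian `p`-subgroup. -/
theorem stmt18 {G Ω : Type*} [Group G] [Fintype G] [Fintype Ω] [MulAction G Ω]
    [FaithfulSMul G Ω] (hprim : IsPrimitiveAction G Ω)
    (hstab : ∀ ω : Ω, IsGenDicyclic (stabilizer G ω)) :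
    ∃ p : ℕ, p.Prime ∧ ∃ T : Subgroup G, T.Normal ∧
      (∀ t ∈ T, t ^ p = 1) ∧ (∀ s ∈ T, ∀ t ∈ T, s * t = t * s) ∧
      (∀ ω₁ ω₂ : Ω, ∃! t : T, t • ω₁ = ω₂) := by
  classical
  obtain ⟨htrans, hbl⟩ := hprim
  haveI := htrans
  by_cases hsing : Subsingleton Ω
  · refine ⟨2, Nat.prime_two, ⊥, inferInstance, ?_, ?_, ?_⟩
    · intro t ht
      rw [Subgroup.mem_bot] at ht
      rw [ht, one_pow]
    · intro s hs t ht
      rw [Subgroup.mem_bot] at hs ht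
      rw [hs, ht]
    · intro ω₁ ω₂
      refine ⟨1, ?_, ?_⟩
      · show ((1 : (⊥ : Subgroup G)) : G) • ω₁ = ω₂
        rw [OneMemClass.coe_one, one_smul]
        exact Subsingleton.elim ω₁ ω₂
      · intro z _
        exact Subtype.ext ((Subgroup.mem_bot).mp z.2)
  · haveI : Nontrivial Ω := not_subsingleton_iff_nontrivial.mp hsing
    haveI : Nonempty Ω := inferInstance
    set F : Subgroup G :=
      { carrier := fpf G Ω
        one_mem' := Or.inl rfl
        mul_mem' := fun {x y} hx hy => fpf_mul_mem htrans hbl hstab hx hy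
        inv_mem' := by
          rintro x (rfl | hx)
          · exact Or.inl inv_one
          · right
            intro γ hγ
            apply hx γ
            have h3 := congrArg (fun z : Ω => x • z) hγ
            rw [smul_inv_smul] at h3
            exact h3.symm } with hF
    have hmemF : ∀ g : G, g ∈ F ↔ (g = 1 ∨ ∀ γ : Ω, g • γ ≠ γ) := fun g => Iff.rfl
    obtain ⟨ω0⟩ := (inferInstance : Nonempty Ω)
    obtain ⟨-, y, -, -, hyω, hy2, hy1, -, -, -⟩ := structG hstab ω0
    have hinvy := fpf_inverted htrans hbl hstab hy1 hy2 hyω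
    have hy2' : y * y = 1 := by rw [← pow_two]; exact hy2
    have habel : ∀ s ∈ F, ∀ t ∈ F, s * t = t * s := by
      intro s hs t ht
      have h1 := hinvy s hs
      have h2 := hinvy t ht
      have h3 := hinvy (s * t) (F.mul_mem hs ht)
      have e0 : (y * s * y) * (y * t * y) = y * (s * (y * y) * t) * y := by group
      rw [hy2', mul_one] at e0
      rw [h1, h2, h3] at e0
      have h4 : t * s = s * t := by
        have h5 := congrArg Inv.inv e0
        simpa [mul_inv_rev] using h5
      exact h4.symm
    have hcardF : Nat.card F = Nat.card Ω := by
      have h6 := card_fpf (G := G) (Ω := Ω) htrans hbl hstab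
      exact (Nat.card_congr (Equiv.subtypeEquivRight (fun x => Iff.rfl))).trans h6
    have hΩ2 : 2 ≤ Nat.card Ω := by
      rw [Nat.card_eq_fintype_card]; exact Fintype.one_lt_card
    obtain ⟨p, hp, hpd⟩ := Nat.exists_prime_and_dvd (n := Nat.card Ω) (by omega)
    haveI : Fact p.Prime := ⟨hp⟩
    have hpd' : p ∣ Fintype.card F := by
      rw [← Nat.card_eq_fintype_card, hcardF]; exact hpd
    obtain ⟨f0, hf0⟩ := exists_prime_orderOf_dvd_card (G := F) p hpd'
    have hf0p : (f0 : G) ^ p = 1 := by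
      have h6 : f0 ^ p = 1 := by rw [← hf0]; exact pow_orderOf_eq_one f0
      have h7 := congrArg (Subtype.val) h6
      simpa using h7
    have hf0ne : (f0 : G) ≠ 1 := by
      intro hc
      have h7 : f0 = 1 := Subtype.ext (by simpa using hc)
      rw [h7, orderOf_one] at hf0
      exact hp.ne_one hf0.symm
    set T : Subgroup G :=
      { carrier := {g : G | g ∈ F ∧ g ^ p = 1}
        one_mem' := ⟨F.one_mem, one_pow p⟩
        mul_mem' := by
          intro x y' hx hy'
          exact ⟨F.mul_mem hx.1 hy'.1, by
            rw [Commute.mul_pow (habel x hx.1 y' hy'.1), hx.2, hy'.2, mul_one]⟩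
        inv_mem' := by
          intro x hx
          exact ⟨F.inv_mem hx.1, by rw [inv_pow, hx.2, inv_one]⟩ } with hT
    have hTnormal : T.Normal := by
      constructor
      intro x hx g
      refine ⟨?_, ?_⟩
      · rcases (hmemF x).mp hx.1 with rfl | hx'
        · rw [mul_one, mul_inv_cancel]
          exact F.one_mem
        · rw [hmemF]
          right
          intro γ hγ
          apply hx' (g⁻¹ • γ)
          calc x • g⁻¹ • γ = g⁻¹ • (g * x * g⁻¹) • γ := by
                simp only [mul_smul]
                rw [inv_smul_smul]
          _ = g⁻¹ • γ := by rw [hγ]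
      · have h8 : (g * x * g⁻¹) ^ p = g * x ^ p * g⁻¹ := by
          have h9 : (MulAut.conj g) (x ^ p) = ((MulAut.conj g) x) ^ p := map_pow _ _ _
          simp only [MulAut.conj_apply] at h9
          exact h9.symm
        rw [h8, hx.2, mul_one, mul_inv_cancel]
    refine ⟨p, hp, T, hTnormal, fun t ht => ht.2, fun s hs t ht => habel s hs.1 t ht.1, ?_⟩
    intro ω₁ ω₂
    haveI := hTnormal
    have hblock := IsBlock.orbit_of_normal (G := G) (N := T) ω₁
    have hf0T : (f0 : G) ∈ T := ⟨f0.2, hf0p⟩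
    have hex : ∃ t : T, t • ω₁ = ω₂ := by
      rcases hbl _ hblock with hsub | huniv
      · exfalso
        have h10 : ((⟨(f0 : G), hf0T⟩ : T)) • ω₁ ∈ orbit T ω₁ := mem_orbit _ _
        have h11 := hsub h10 (mem_orbit_self ω₁)
        have h12 : (f0 : G) • ω₁ = ω₁ := h11
        rcases (hmemF (f0 : G)).mp f0.2 with h13 | h13
        · exact hf0ne h13
        · exact h13 ω₁ h12
      · have h14 : ω₂ ∈ orbit T ω₁ := by rw [huniv]; exact Set.mem_univ _
        obtain ⟨t, ht⟩ := h14
        exact ⟨t, ht⟩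
    obtain ⟨t, ht⟩ := hex
    refine ⟨t, ht, ?_⟩
    intro z hz
    have hz' : (z : G) • ω₁ = ω₂ := hz
    have ht' : (t : G) • ω₁ = ω₂ := ht
    have h15 : ((t : G)⁻¹ * (z : G)) • ω₁ = ω₁ := by
      rw [mul_smul, hz', ← ht', inv_smul_smul]
    have h16 : (t : G)⁻¹ * (z : G) ∈ F := F.mul_mem (F.inv_mem t.2.1) z.2.1
    rcases (hmemF _).mp h16 with h17 | h17
    · have h18 : (z : G) = (t : G) := by
        have h19 := congrArg (fun w => (t : G) * w) h17
        simpa [mul_assoc] using h19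
      exact Subtype.ext h18
    · exact absurd h15 (h17 ω₁)
end

section
/- Let R = Q₈ × E with E an elementary abelian 2-group, M = ⟨-1⟩ × E ≤ R, and B = ⟨R, α_i, α_j, α_k⟩ acting on R (with R acting by right multiplication and α_ℓ the involution swapping ℓe and -ℓe for all e ∈ E). Then M = Z(B), |B : R| = 8, and B has exponent 4. -/
/-- The right regular representation of a group: `g` acts as `v ↦ v * g⁻¹`
(a homomorphism whose image consists of all right translations). -/
def rightRegular (G : Type*) [Group G] : G →* Equiv.Perm G where
  toFun g := Equiv.mulRight g⁻¹
  map_one' := by ext v; simp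
  map_mul' g h := by ext v; simp [mul_assoc]

namespace Stmt19aux
open QuaternionGroup Equiv

abbrev Q8 := QuaternionGroup 2
def ρQ : Q8 →* Equiv.Perm Q8 := rightRegular Q8
def wi : Equiv.Perm Q8 := Equiv.swap (a 1) (a 3)
def wj : Equiv.Perm Q8 := Equiv.swap (xa 0) (xa 2)
def wk : Equiv.Perm Q8 := Equiv.swap (xa 1) (xa 3)
abbrev B4 := Bool × Bool × Bool × Bool
def ψ : B4 → Equiv.Perm Q8 :=
  fun b => (cond b.1 (ρQ (a 2)) 1) * (cond b.2.1 wi 1) * (cond b.2.2.1 wj 1) * (cond b.2.2.2 wk 1)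
def bx (b b' : B4) : B4 :=
  (xor b.1 b'.1, xor b.2.1 b'.2.1, xor b.2.2.1 b'.2.2.1, xor b.2.2.2 b'.2.2.2)

/-- class of q in Q8 / {±1}: 0 ↦ {±1}, 1 ↦ {±i}, 2 ↦ {±j}, 3 ↦ {±k} -/
def cls (q : Q8) : Fin 4 :=
  if q = a 0 ∨ q = a 2 then 0 else if q = a 1 ∨ q = a 3 then 1
  else if q = xa 0 ∨ q = xa 2 then 2 else 3

def cact (q : Q8) (b : B4) : B4 :=
  match cls q with
  | 0 => b
  | 1 => (xor b.1 b.2.1, b.2.1, xor b.2.1 b.2.2.2, xor b.2.1 b.2.2.1)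
  | 2 => (xor b.1 b.2.2.1, xor b.2.2.1 b.2.2.2, b.2.2.1, xor b.2.2.1 b.2.1)
  | 3 => (xor b.1 b.2.2.2, xor b.2.2.2 b.2.2.1, xor b.2.2.2 b.2.1, b.2.2.2)

set_option maxHeartbeats 1000000 in
lemma L1 : ∀ b b' : B4, ψ b * ψ b' = ψ (bx b b') := by decide

set_option maxHeartbeats 1000000 in
lemma Lconj : ∀ (q : Q8) (b : B4), (ρQ q)⁻¹ * ψ b * ρQ q = ψ (cact q b) := by decide

set_option maxHeartbeats 2000000 in
lemma L3 : ∀ (q : Q8) (b : B4),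
    ¬ (∀ q' : Q8, ρQ q' * (ρQ q * ψ b) = (ρQ q * ψ b) * ρQ q') ∨
    ¬ (wi * (ρQ q * ψ b) = (ρQ q * ψ b) * wi) ∨
    ¬ (wj * (ρQ q * ψ b) = (ρQ q * ψ b) * wj) ∨
    ¬ (wk * (ρQ q * ψ b) = (ρQ q * ψ b) * wk) ∨
    ρQ q * ψ b = 1 ∨ ρQ q * ψ b = ρQ (a 2) := by decide

set_option maxHeartbeats 2000000 in
lemma L4 : ∀ (q : Q8) (b : B4), (ρQ q * ψ b) ^ 4 = 1 := by decide

lemma Lψ0 : ψ (false, false, false, false) = 1 := by decide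
lemma Lψi : ψ (false, true, false, false) = wi := by decide
lemma Lψj : ψ (false, false, true, false) = wj := by decide
lemma Lψk : ψ (false, false, false, true) = wk := by decide
lemma Lfix : ∀ b : Bool × Bool × Bool, ψ (false, b) (a 0) = a 0 := by decide
lemma Linj : ∀ b b' : Bool × Bool × Bool, ψ (false, b) = ψ (false, b') → b = b' := by decide
lemma Lcen : ∀ q : Q8, (q = a 0 ∨ q = a 2) → ∀ q' : Q8, q * q' = q' * q := by decide
lemma Lcomm2 : ∀ (b : B4) (q : Q8), ¬ (q = a 0 ∨ q = a 2) ∨ ψ b * ρQ q = ρQ q * ψ b := by decide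
lemma Lorder : (a 1 : Q8) ^ 2 ≠ 1 := by decide
lemma Lone : (1 : Q8) = a 0 := by decide
lemma Lbxself : ∀ b : B4, bx b b = (false, false, false, false) := by decide
lemma Lsplit : ∀ (b0 : Bool) (b : Bool × Bool × Bool),
    ψ (b0, b) = (cond b0 (ρQ (a 2)) 1) * ψ (false, b) := by decide

/-- The subgroup of Perm Q8 generated by right translations and the three swaps,
described explicitly. -/
def S0 : Subgroup (Equiv.Perm Q8) where
  carrier := {f | ∃ q b, f = ρQ q * ψ b}
  one_mem' := ⟨1, (false, false, false, false), by rw [Lψ0, map_one, one_mul]⟩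
  mul_mem' := by
    rintro f g ⟨q, b, rfl⟩ ⟨q', b', rfl⟩
    refine ⟨q * q', bx (cact q' b) b', ?_⟩
    have h := Lconj q' b
    have : (ρQ q * ψ b) * (ρQ q' * ψ b') = (ρQ q * ρQ q') * (((ρQ q')⁻¹ * ψ b * ρQ q') * ψ b') := by
      group
    rw [this, h, L1, ← map_mul]
  inv_mem' := by
    rintro f ⟨q, b, rfl⟩
    refine ⟨q⁻¹, cact q⁻¹ b, ?_⟩
    have h := Lconj q⁻¹ b
    have hinv : ψ b * ψ b = 1 := by rw [L1, Lbxself, Lψ0]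
    have hψinv : (ψ b)⁻¹ = ψ b := inv_eq_of_mul_eq_one_right hinv
    calc (ρQ q * ψ b)⁻¹ = (ψ b)⁻¹ * (ρQ q)⁻¹ := mul_inv_rev _ _
      _ = ψ b * ρQ q⁻¹ := by rw [hψinv, map_inv]
      _ = ρQ q⁻¹ * ((ρQ q⁻¹)⁻¹ * ψ b * ρQ q⁻¹) := by group
      _ = ρQ q⁻¹ * ψ (cact q⁻¹ b) := by rw [h]

lemma mem_S0 {f : Equiv.Perm Q8} : f ∈ S0 ↔ ∃ q b, f = ρQ q * ψ b := Iff.rfl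


lemma ψ_mem_closure (b : B4) :
    ψ b ∈ Subgroup.closure (Set.range ρQ ∪ {wi, wj, wk}) := by
  have hρ : ρQ (a 2) ∈ Subgroup.closure (Set.range ρQ ∪ {wi, wj, wk}) :=
    Subgroup.subset_closure (Or.inl ⟨a 2, rfl⟩)
  have hi : wi ∈ Subgroup.closure (Set.range ρQ ∪ {wi, wj, wk}) :=
    Subgroup.subset_closure (Or.inr (by simp))
  have hj : wj ∈ Subgroup.closure (Set.range ρQ ∪ {wi, wj, wk}) :=
    Subgroup.subset_closure (Or.inr (by simp))
  have hk : wk ∈ Subgroup.closure (Set.range ρQ ∪ {wi, wj, wk}) :=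
    Subgroup.subset_closure (Or.inr (by simp))
  obtain ⟨b0, b1, b2, b3⟩ := b
  refine Subgroup.mul_mem _ (Subgroup.mul_mem _ (Subgroup.mul_mem _ ?_ ?_) ?_) ?_ <;>
    [cases b0; cases b1; cases b2; cases b3] <;>
    first | exact Subgroup.one_mem _ | assumption

lemma S0_eq : Subgroup.closure (Set.range ρQ ∪ {wi, wj, wk}) = S0 := by
  apply le_antisymm
  · rw [Subgroup.closure_le]
    rintro f (⟨q, rfl⟩ | hf)
    · exact ⟨q, (false, false, false, false), by rw [Lψ0, mul_one]⟩
    · rcases hf with rfl | rfl | rfl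
      · exact ⟨1, (false, true, false, false), by rw [Lψi, map_one, one_mul]⟩
      · exact ⟨1, (false, false, true, false), by rw [Lψj, map_one, one_mul]⟩
      · exact ⟨1, (false, false, false, true), by rw [Lψk, map_one, one_mul]⟩
  · rintro f ⟨q, b, rfl⟩
    exact Subgroup.mul_mem _ (Subgroup.subset_closure (Or.inl ⟨q, rfl⟩)) (ψ_mem_closure b)

def φ3 : Q8 × (Bool × Bool × Bool) → Equiv.Perm Q8 := fun p => ρQ p.1 * ψ (false, p.2)

lemma φ3_inj : Function.Injective φ3 := by
  rintro ⟨q, b⟩ ⟨q', b'⟩ h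
  have h0 := congrArg (fun f : Equiv.Perm Q8 => f (a 0)) h
  simp only [φ3, Equiv.Perm.mul_apply] at h0
  rw [Lfix, Lfix] at h0
  have hq : q = q' := by
    have : (a 0 : Q8) * q⁻¹ = a 0 * q'⁻¹ := h0
    simpa using this
  subst hq
  have := mul_left_cancel h
  exact Prod.ext rfl (Linj _ _ this)

lemma S0_coe : (S0 : Set (Equiv.Perm Q8)) = Set.range φ3 := by
  ext f
  constructor
  · rintro ⟨q, ⟨b0, b⟩, rfl⟩
    cases b0
    · exact ⟨(q, b), rfl⟩
    · refine ⟨(q * a 2, b), ?_⟩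
      show ρQ (q * a 2) * ψ (false, b) = ρQ q * ψ (true, b)
      rw [Lsplit true b, map_mul, mul_assoc]
      rfl
  · rintro ⟨⟨q, b⟩, rfl⟩
    exact ⟨q, (false, b), rfl⟩

lemma card_S0 : Nat.card S0 = 64 := by
  have h1 : Nat.card S0 = Nat.card (Set.range φ3) := Nat.card_congr (Equiv.setCongr S0_coe)
  rw [h1, Nat.card_range_of_injective φ3_inj, Nat.card_eq_fintype_card]
  decide


lemma Lwi_eq : ∀ q : Q8, wi q = (if q = a 1 then a 3 else if q = a 3 then a 1 else q) := by decide
lemma Lwj_eq : ∀ q : Q8, wj q = (if q = xa 0 then xa 2 else if q = xa 2 then xa 0 else q) := by decide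
lemma Lwk_eq : ∀ q : Q8, wk q = (if q = xa 1 then xa 3 else if q = xa 3 then xa 1 else q) := by decide

section Elevel
set_option linter.unusedSectionVars false
variable {E : Type*} [CommGroup E] [Fintype E]

def Ψ : Equiv.Perm Q8 × E →* Equiv.Perm (Q8 × E) where
  toFun p := Equiv.prodCongr p.1 (Equiv.mulRight p.2⁻¹)
  map_one' := by ext ⟨q, e⟩ <;> simp
  map_mul' x y := by ext ⟨q, e⟩ <;> simp [mul_assoc]

lemma Ψ_apply (p : Equiv.Perm Q8 × E) (q : Q8) (e : E) : Ψ p (q, e) = (p.1 q, e * p.2⁻¹) := rfl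

lemma Ψ_inj : Function.Injective (Ψ (E := E)) := by
  intro x y h
  have happ : ∀ q, (Ψ x) (q, 1) = (Ψ y) (q, 1) := fun q => by rw [h]
  refine Prod.ext (Equiv.ext fun q => ?_) ?_
  · exact congrArg Prod.fst (happ q)
  · have := congrArg Prod.snd (happ (a 0))
    simp only [Ψ_apply, one_mul] at this
    exact inv_injective this

lemma Ψρ (g : Q8 × E) : Ψ (ρQ g.1, g.2) = rightRegular (Q8 × E) g := by
  ext ⟨q, e⟩ <;> simp [Ψ_apply, rightRegular, ρQ, Prod.mul_def]

lemma Ψ_one_e (e : E) : Ψ (1, e) = rightRegular (Q8 × E) (1, e) := by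
  rw [← Ψρ (1, e)]; simp


lemma Ψwi {αi : Equiv.Perm (Q8 × E)}
    (hαi : ∀ p : Q8 × E, αi p = if p.1 = a 1 then (a 3, p.2)
      else if p.1 = a 3 then (a 1, p.2) else p) : Ψ (wi, (1 : E)) = αi := by
  ext ⟨q, e⟩ <;> rw [hαi (q, e)] <;>
    simp only [Ψ_apply, Lwi_eq q, inv_one, mul_one] <;> split_ifs <;> rfl

lemma Ψwj {αj : Equiv.Perm (Q8 × E)}
    (hαj : ∀ p : Q8 × E, αj p = if p.1 = xa 0 then (xa 2, p.2)
      else if p.1 = xa 2 then (xa 0, p.2) else p) : Ψ (wj, (1 : E)) = αj := by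
  ext ⟨q, e⟩ <;> rw [hαj (q, e)] <;>
    simp only [Ψ_apply, Lwj_eq q, inv_one, mul_one] <;> split_ifs <;> rfl

lemma Ψwk {αk : Equiv.Perm (Q8 × E)}
    (hαk : ∀ p : Q8 × E, αk p = if p.1 = xa 1 then (xa 3, p.2)
      else if p.1 = xa 3 then (xa 1, p.2) else p) : Ψ (wk, (1 : E)) = αk := by
  ext ⟨q, e⟩ <;> rw [hαk (q, e)] <;>
    simp only [Ψ_apply, Lwk_eq q, inv_one, mul_one] <;> split_ifs <;> rfl

lemma mem_prodS0 (f : Equiv.Perm Q8) (e : E) (hf : f ∈ S0) : (f, e) ∈ S0.prod ⊤ :=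
  Subgroup.mem_prod.2 ⟨hf, trivial⟩

lemma ρQ_mem_S0 (q : Q8) : ρQ q ∈ S0 := ⟨q, (false, false, false, false), by rw [Lψ0, mul_one]⟩
lemma wi_mem_S0 : wi ∈ S0 := ⟨1, (false, true, false, false), by rw [Lψi, map_one, one_mul]⟩
lemma wj_mem_S0 : wj ∈ S0 := ⟨1, (false, false, true, false), by rw [Lψj, map_one, one_mul]⟩
lemma wk_mem_S0 : wk ∈ S0 := ⟨1, (false, false, false, true), by rw [Lψk, map_one, one_mul]⟩
lemma ψ_mem_S0 (b : B4) : ψ b ∈ S0 := ⟨1, b, by rw [map_one, one_mul]⟩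

lemma B_eq {αi αj αk : Equiv.Perm (Q8 × E)}
    (hαi : ∀ p : Q8 × E, αi p = if p.1 = a 1 then (a 3, p.2)
      else if p.1 = a 3 then (a 1, p.2) else p)
    (hαj : ∀ p : Q8 × E, αj p = if p.1 = xa 0 then (xa 2, p.2)
      else if p.1 = xa 2 then (xa 0, p.2) else p)
    (hαk : ∀ p : Q8 × E, αk p = if p.1 = xa 1 then (xa 3, p.2)
      else if p.1 = xa 3 then (xa 1, p.2) else p) :
    Subgroup.closure (Set.range (rightRegular (Q8 × E)) ∪ {αi, αj, αk}) =
      Subgroup.map Ψ (S0.prod ⊤) := by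
  apply le_antisymm
  · rw [Subgroup.closure_le]
    rintro x (⟨g, rfl⟩ | hx)
    · exact ⟨(ρQ g.1, g.2), mem_prodS0 _ _ (ρQ_mem_S0 g.1), Ψρ g⟩
    · rcases hx with rfl | rfl | rfl
      · exact ⟨(wi, 1), mem_prodS0 _ _ wi_mem_S0, Ψwi hαi⟩
      · exact ⟨(wj, 1), mem_prodS0 _ _ wj_mem_S0, Ψwj hαj⟩
      · exact ⟨(wk, 1), mem_prodS0 _ _ wk_mem_S0, Ψwk hαk⟩
  · rintro x ⟨⟨f, e⟩, hfe, rfl⟩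
    have hf : f ∈ S0 := (Subgroup.mem_prod.1 hfe).1
    set C := Subgroup.closure (Set.range (rightRegular (Q8 × E)) ∪ {αi, αj, αk}) with hC
    have key : ∀ f' ∈ S0, Ψ (f', (1 : E)) ∈ C := by
      intro f' hf'
      rw [← S0_eq] at hf'
      refine Subgroup.closure_induction ?_ ?_ ?_ ?_ hf'
      · rintro y (⟨g0, rfl⟩ | hy)
        · exact (Ψρ ((g0, (1 : E)))) ▸ Subgroup.subset_closure (Or.inl ⟨((g0, (1 : E))), rfl⟩)
        · rcases hy with rfl | rfl | rfl
          · exact (Ψwi hαi) ▸ Subgroup.subset_closure (Or.inr (by simp))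
          · exact (Ψwj hαj) ▸ Subgroup.subset_closure (Or.inr (by simp))
          · exact (Ψwk hαk) ▸ Subgroup.subset_closure (Or.inr (by simp))
      · have : ((1 : Equiv.Perm Q8), (1 : E)) = 1 := rfl
        rw [this, map_one]; exact Subgroup.one_mem _
      · intro y z _ _ hy hz
        have : ((y * z : Equiv.Perm Q8), (1 : E)) = (y, (1 : E)) * (z, (1 : E)) := by
          simp [Prod.mul_def]
        rw [this, map_mul]; exact Subgroup.mul_mem _ hy hz
      · intro y _ hy
        have : ((y⁻¹ : Equiv.Perm Q8), (1 : E)) = (y, (1 : E))⁻¹ := by simp [Prod.inv_mk]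
        rw [this, map_inv]; exact Subgroup.inv_mem _ hy
    have hsplit : ((f, e) : Equiv.Perm Q8 × E) = (f, 1) * (1, e) := by simp [Prod.mul_def]
    rw [hsplit, map_mul]
    exact Subgroup.mul_mem _ (key f hf)
      ((Ψ_one_e e) ▸ Subgroup.subset_closure (Or.inl ⟨(1, e), rfl⟩))


/-- `⟨-1⟩ × E` described explicitly. -/
def Msub : Subgroup (Q8 × E) where
  carrier := {m | m.1 = a 0 ∨ m.1 = a 2}
  one_mem' := Or.inl (by show (1 : Q8) = a 0; decide)
  mul_mem' := by
    rintro x y (h1 | h1) (h2 | h2) <;>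
      · show x.1 * y.1 = a 0 ∨ x.1 * y.1 = a 2
        rw [h1, h2]; decide
  inv_mem' := by
    rintro x (h1 | h1) <;>
      · show x.1⁻¹ = a 0 ∨ x.1⁻¹ = a 2
        rw [h1]; decide

lemma Msub_eq : Subgroup.closure ({((a 2 : Q8), (1 : E))} ∪
    Set.range fun e : E => ((1 : Q8), e)) = Msub := by
  apply le_antisymm
  · rw [Subgroup.closure_le]
    rintro x (rfl | ⟨e, rfl⟩)
    · exact Or.inr rfl
    · exact Or.inl (by show (1 : Q8) = a 0; decide)
  · rintro ⟨q, e⟩ (h | h) <;> rw [show (q : Q8) = _ from h]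
    · have : ((a 0 : Q8), e) = ((1 : Q8), e) := by rw [← Lone]
      rw [this]
      exact Subgroup.subset_closure (Or.inr ⟨e, rfl⟩)
    · have : ((a 2 : Q8), e) = ((a 2 : Q8), (1 : E)) * ((1 : Q8), e) := by
        simp [Prod.mul_def]
      rw [this]
      exact Subgroup.mul_mem _ (Subgroup.subset_closure (Or.inl rfl))
        (Subgroup.subset_closure (Or.inr ⟨e, rfl⟩))

lemma ρR_inj : Function.Injective (rightRegular (Q8 × E)) := by
  intro g g' h
  have := congrArg (fun σ : Equiv.Perm (Q8 × E) => σ 1) h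
  simp only [rightRegular, MonoidHom.coe_mk, OneHom.coe_mk, Equiv.coe_mulRight, one_mul] at this
  exact inv_injective this

end Elevel
end Stmt19aux

open Stmt19aux QuaternionGroup in
/-- Let `R = Q₈ × E` with `E` an elementary abelian 2-group,
`M = ⟨-1⟩ × E ≤ R`, and `B = ⟨R, α_i, α_j, α_k⟩ ≤ Sym(R)`, where `R` acts on
itself by right multiplication and, in `QuaternionGroup 2`, `i = a 1`,
`-1 = a 2`, `j = xa 0`, `k = xa 1`, so that `α_i` swaps `(a 1, e) ↔ (a 3, e)`,
`α_j` swaps `(xa 0, e) ↔ (xa 2, e)` and `α_k` swaps `(xa 1, e) ↔ (xa 3, e)`.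
Then `M = Z(B)`, `|B : R| = 8`, and `B` has exponent 4. -/
theorem stmt19 {E : Type*} [CommGroup E] [Fintype E] (hE : ∀ e : E, e ^ 2 = 1)
    (αi αj αk : Equiv.Perm (QuaternionGroup 2 × E))
    (hαi : ∀ p : QuaternionGroup 2 × E,
      αi p = if p.1 = QuaternionGroup.a 1 then (QuaternionGroup.a 3, p.2)
        else if p.1 = QuaternionGroup.a 3 then (QuaternionGroup.a 1, p.2)
        else p)
    (hαj : ∀ p : QuaternionGroup 2 × E,
      αj p = if p.1 = QuaternionGroup.xa 0 then (QuaternionGroup.xa 2, p.2)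
        else if p.1 = QuaternionGroup.xa 2 then (QuaternionGroup.xa 0, p.2)
        else p)
    (hαk : ∀ p : QuaternionGroup 2 × E,
      αk p = if p.1 = QuaternionGroup.xa 1 then (QuaternionGroup.xa 3, p.2)
        else if p.1 = QuaternionGroup.xa 3 then (QuaternionGroup.xa 1, p.2)
        else p)
    (M : Subgroup (QuaternionGroup 2 × E))
    (hM : M = Subgroup.closure ({(QuaternionGroup.a 2, (1 : E))} ∪
      Set.range fun e : E => ((1 : QuaternionGroup 2), e)))
    (Bgrp : Subgroup (Equiv.Perm (QuaternionGroup 2 × E)))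
    (hB : Bgrp = Subgroup.closure
      (Set.range (rightRegular (QuaternionGroup 2 × E)) ∪ {αi, αj, αk})) :
    (Subgroup.center Bgrp).map Bgrp.subtype =
        M.map (rightRegular (QuaternionGroup 2 × E)) ∧
      Subgroup.relIndex (rightRegular (QuaternionGroup 2 × E)).range Bgrp = 8 ∧
      Monoid.exponent Bgrp = 4 := by
  have hBG : Bgrp = Subgroup.map Ψ (S0.prod (⊤ : Subgroup E)) := by
    rw [hB, B_eq hαi hαj hαk]
  have hMM : M = Msub := by rw [hM, Msub_eq]
  subst hBG hMM
  set ρR := rightRegular (Q8 × E) with hρR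
  set BG := Subgroup.map Ψ (S0.prod (⊤ : Subgroup E)) with hBGdef
  -- basic memberships
  have hρmem : ∀ g : Q8 × E, ρR g ∈ BG := fun g =>
    ⟨(ρQ g.1, g.2), mem_prodS0 _ _ (ρQ_mem_S0 g.1), Ψρ g⟩
  refine ⟨?_, ?_, ?_⟩
  · -- center
    ext x
    simp only [Subgroup.mem_map]
    constructor
    · rintro ⟨z, hzc, rfl⟩
      obtain ⟨⟨z, hzB⟩, rfl⟩ : ∃ y : BG, y = z := ⟨z, rfl⟩
      obtain ⟨⟨f, e⟩, hK, rfl⟩ := hzB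
      obtain ⟨q, b, rfl⟩ := (Subgroup.mem_prod.1 hK).1
      have hcom : ∀ u : Equiv.Perm Q8 × E, (hu : Ψ u ∈ BG) →
          u * (ρQ q * ψ b, e) = (ρQ q * ψ b, e) * u := by
        intro u hu
        apply Ψ_inj
        rw [map_mul, map_mul]
        exact congrArg BG.subtype (Subgroup.mem_center_iff.1 hzc ⟨Ψ u, hu⟩)
      have hc1 : ∀ q' : Q8, ρQ q' * (ρQ q * ψ b) = (ρQ q * ψ b) * ρQ q' := by
        intro q'
        exact congrArg Prod.fst
          (hcom (ρQ q', 1) ⟨(ρQ q', 1), mem_prodS0 _ _ (ρQ_mem_S0 q'), rfl⟩)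
      have hci : wi * (ρQ q * ψ b) = (ρQ q * ψ b) * wi :=
        congrArg Prod.fst (hcom (wi, 1) ⟨(wi, 1), mem_prodS0 _ _ wi_mem_S0, rfl⟩)
      have hcj : wj * (ρQ q * ψ b) = (ρQ q * ψ b) * wj :=
        congrArg Prod.fst (hcom (wj, 1) ⟨(wj, 1), mem_prodS0 _ _ wj_mem_S0, rfl⟩)
      have hck : wk * (ρQ q * ψ b) = (ρQ q * ψ b) * wk :=
        congrArg Prod.fst (hcom (wk, 1) ⟨(wk, 1), mem_prodS0 _ _ wk_mem_S0, rfl⟩)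
      rcases L3 q b with h | h | h | h | h | h
      · exact absurd hc1 h
      · exact absurd hci h
      · exact absurd hcj h
      · exact absurd hck h
      · refine ⟨((1 : Q8), e), Or.inl Lone, ?_⟩
        show ρR ((1 : Q8), e) = Ψ (ρQ q * ψ b, e)
        rw [h]
        exact (Ψ_one_e e).symm
      · refine ⟨((a 2 : Q8), e), Or.inr rfl, ?_⟩
        show ρR ((a 2 : Q8), e) = Ψ (ρQ q * ψ b, e)
        rw [h]
        exact (Ψρ ((a 2 : Q8), e)).symm
    · rintro ⟨m, hm, rfl⟩
      refine ⟨⟨ρR m, hρmem m⟩, ?_, rfl⟩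
      rw [Subgroup.mem_center_iff]
      rintro ⟨y, hy⟩
      apply Subtype.ext
      show y * ρR m = ρR m * y
      obtain ⟨⟨f, e⟩, hK, rfl⟩ := hy
      obtain ⟨q, b, rfl⟩ := (Subgroup.mem_prod.1 hK).1
      rw [← Ψρ m, ← map_mul, ← map_mul]
      congr 1
      have hψc : ψ b * ρQ m.1 = ρQ m.1 * ψ b := by
        rcases Lcomm2 b m.1 with h | h
        · exact absurd hm h
        · exact h
      have hqc : ρQ q * ρQ m.1 = ρQ m.1 * ρQ q := by
        rw [← map_mul, ← map_mul, Lcen m.1 hm q]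
      refine Prod.ext ?_ (mul_comm _ _)
      show (ρQ q * ψ b) * ρQ m.1 = ρQ m.1 * (ρQ q * ψ b)
      rw [mul_assoc, hψc, ← mul_assoc, hqc, mul_assoc]
  · -- relindex
    have hle : ρR.range ≤ BG := by rintro x ⟨g, rfl⟩; exact hρmem g
    have hEpos : 0 < Nat.card E := Nat.card_pos
    have hcard1 : Nat.card (ρR.range.subgroupOf BG) = 8 * Nat.card E := by
      have e1 : Nat.card (ρR.range.subgroupOf BG) = Nat.card ρR.range :=
        Nat.card_congr (Subgroup.subgroupOfEquivOfLe hle).toEquiv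
      have e2 : Nat.card ρR.range = Nat.card (Q8 × E) :=
        Nat.card_congr ((Equiv.setCongr (MonoidHom.coe_range ρR)).trans
          (Equiv.ofInjective ρR ρR_inj).symm)
      rw [e1, e2, Nat.card_prod]
      congr 1
      rw [Nat.card_eq_fintype_card]
      decide
    have hcardB : Nat.card BG = 64 * Nat.card E := by
      have e1 : Nat.card BG = Nat.card (S0.prod (⊤ : Subgroup E)) :=
        Nat.card_congr (Subgroup.equivMapOfInjective (S0.prod (⊤ : Subgroup E)) Ψ Ψ_inj).toEquiv.symm
      have e2 : Nat.card (S0.prod (⊤ : Subgroup E)) =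
          Nat.card (↥S0 × ↥(⊤ : Subgroup E)) :=
        Nat.card_congr (Subgroup.prodEquiv S0 ⊤).toEquiv
      rw [e1, e2, Nat.card_prod, card_S0, Subgroup.card_top]
    have key := Subgroup.card_mul_index (ρR.range.subgroupOf BG)
    rw [hcard1, hcardB] at key
    have : (8 * Nat.card E) * (ρR.range.subgroupOf BG).index =
        (8 * Nat.card E) * 8 := by rw [key]; ring
    exact Nat.eq_of_mul_eq_mul_left (by positivity) this
  · -- exponent
    have hpow : ∀ x : BG, x ^ 4 = 1 := by
      rintro ⟨x, hx⟩
      obtain ⟨⟨f, e⟩, hK, rfl⟩ := hx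
      obtain ⟨q, b, rfl⟩ := (Subgroup.mem_prod.1 hK).1
      apply Subtype.ext
      rw [SubmonoidClass.coe_pow]
      show (Ψ (ρQ q * ψ b, e)) ^ 4 = 1
      rw [← map_pow]
      have h4 : ((ρQ q * ψ b, e) : Equiv.Perm Q8 × E) ^ 4 = 1 := by
        have h1 : (ρQ q * ψ b) ^ 4 = 1 := L4 q b
        have h2 : e ^ 4 = 1 := by
          rw [show (4 : ℕ) = 2 * 2 from rfl, pow_mul, hE]
        rw [Prod.pow_mk, h1, h2]
        rfl
      rw [h4, map_one]
    have hx0mem : ρR ((a 1 : Q8), (1 : E)) ∈ BG := hρmem _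
    set x0 : BG := ⟨ρR ((a 1 : Q8), (1 : E)), hx0mem⟩ with hx0
    have h2 : ¬ x0 ^ (2 : ℕ) ^ 1 = 1 := by
      intro h
      have hc : (ρR ((a 1 : Q8), (1 : E))) ^ 2 = 1 := by
        have := Subtype.ext_iff.1 h
        rwa [SubmonoidClass.coe_pow] at this
      rw [← map_pow] at hc
      have h4 := ρR_inj (hc.trans (map_one ρR).symm)
      rw [Prod.pow_mk] at h4
      exact Lorder (congrArg Prod.fst h4)
    have hord : orderOf x0 = 4 := by
      have hp : Fact (Nat.Prime 2) := ⟨Nat.prime_two⟩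
      have := orderOf_eq_prime_pow (x := x0) (p := 2) (n := 1) h2 (by
        norm_num
        exact hpow x0)
      norm_num at this
      exact this
    refine Nat.dvd_antisymm ?_ ?_
    · exact Monoid.exponent_dvd_of_forall_pow_eq_one hpow
    · rw [← hord]
      exact Monoid.order_dvd_exponent x0
end
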